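/- Let Q₁, Q₂ be probability measures and let Q₁ = ⊗_{s∈S} Q₁,s and Q₂ = ⊗_{s∈S} Q₂,s be finite products where each Q₁,s = Bern(1/2 − δ_s), Q₂,s = Bern(1/2 + δ_s) with 0 ≤ δ_s ≤ 1/4. If ∑_{s∈S} δ_s² ≤ γ² with 12γ² ≤ 1, then TV(Q₁, Q₂) ≤ √(6 ∑_s δ_s²) ≤ √6·γ. -/

import Mathlib

open MeasureTheory Finset

/-- The Bernoulli measure on Bool with success probability p. -/
noncomputable def bernMeasure (p : ℝ) : Measure Bool :=
  (ENNReal.ofReal p) • Measure.dirac true + (ENNReal.ofReal (1 - p)) • Measure.dirac false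

instance bernMeasure_finite (p : ℝ) : IsFiniteMeasure (bernMeasure p) := by
  constructor
  simp only [bernMeasure, Measure.add_apply, Measure.smul_apply, smul_eq_mul,
    Measure.dirac_apply_of_mem (Set.mem_univ _)]
  simp [ENNReal.add_lt_top, ENNReal.ofReal_lt_top]

/-- Total variation distance between two measures. -/
noncomputable def tvDist {α : Type*} [MeasurableSpace α] (P Q : Measure α) : ℝ :=
  sSup {r : ℝ | ∃ s : Set α, MeasurableSet s ∧ r = |(P s).toReal - (Q s).toReal|}

lemma bern_singleton (p : ℝ) (b : Bool) :
    bernMeasure p {b} = ENNReal.ofReal (if b then p else 1 - p) := by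
  cases b <;>
  simp [bernMeasure, Measure.dirac_apply' _ (measurableSet_singleton _)]

lemma pi_bern_singleton {ι : Type*} [Fintype ι] (g : ι → ℝ) (x : ι → Bool) :
    (Measure.pi fun s : ι => bernMeasure (g s)) {x}
      = ∏ s, ENNReal.ofReal (if x s then g s else 1 - g s) := by
  have h : {x} = Set.pi Set.univ (fun s => {x s}) := by
    ext y; simp [funext_iff, Set.mem_pi]
  rw [h, Measure.pi_pi]
  simp [bern_singleton]

lemma sqrt_prod' {α : Type*} (F : Finset α) (a : α → ℝ) (h : ∀ i ∈ F, 0 ≤ a i) :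
    Real.sqrt (∏ i ∈ F, a i) = ∏ i ∈ F, Real.sqrt (a i) := by
  classical
  induction F using Finset.induction with
  | empty => simp
  | insert _ _ hx ih =>
    rename_i i F
    rw [Finset.prod_insert hx, Finset.prod_insert hx,
      Real.sqrt_mul (h i (Finset.mem_insert_self _ _)),
      ih (fun j hj => h j (Finset.mem_insert_of_mem hj))]

lemma weierstrass {α : Type*} (F : Finset α) (a : α → ℝ) (h0 : ∀ i ∈ F, 0 ≤ a i)
    (h1 : ∀ i ∈ F, a i ≤ 1) : 1 - ∑ i ∈ F, a i ≤ ∏ i ∈ F, (1 - a i) := by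
  classical
  induction F using Finset.induction with
  | empty => simp
  | insert _ _ hx ih =>
    rename_i i F
    rw [Finset.prod_insert hx, Finset.sum_insert hx]
    have hprod0 : (0:ℝ) ≤ ∏ j ∈ F, (1 - a j) :=
      Finset.prod_nonneg fun j hj => by
        have := h1 j (Finset.mem_insert_of_mem hj); linarith
    have hi0 := h0 i (Finset.mem_insert_self _ _)
    have hi1 := h1 i (Finset.mem_insert_self _ _)
    have hih := ih (fun j hj => h0 j (Finset.mem_insert_of_mem hj))
      (fun j hj => h1 j (Finset.mem_insert_of_mem hj))
    have hsum0 : (0:ℝ) ≤ ∑ j ∈ F, a j := Finset.sum_nonneg fun j hj =>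
      h0 j (Finset.mem_insert_of_mem hj)
    nlinarith [mul_le_mul_of_nonneg_left hih (by linarith : (0:ℝ) ≤ 1 - a i)]

/-- Core finite "TV ≤ √(1 - B²)" bound via Cauchy–Schwarz (Hellinger). -/
lemma tv_core {α : Type*} [Fintype α] (w₁ w₂ : α → ℝ) (h₁ : ∀ x, 0 ≤ w₁ x)
    (h₂ : ∀ x, 0 ≤ w₂ x) (hs₁ : ∑ x, w₁ x = 1) (hs₂ : ∑ x, w₂ x = 1)
    (B : ℝ) (hB : ∑ x, Real.sqrt (w₁ x * w₂ x) = B) (T : Finset α) :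
    |∑ x ∈ T, w₁ x - ∑ x ∈ T, w₂ x| ≤ Real.sqrt (1 - B ^ 2) := by
  classical
  set d : α → ℝ := fun x => w₁ x - w₂ x with hd
  -- step A : |∑_T d| ≤ (1/2) ∑ |d|
  have hsplit : ∑ x ∈ T, d x + ∑ x ∈ Tᶜ, d x = 0 := by
    rw [Finset.sum_add_sum_compl]
    simp [hd, Finset.sum_sub_distrib, hs₁, hs₂]
  have hA : |∑ x ∈ T, d x| ≤ (∑ x, |d x|) / 2 := by
    have h1 : |∑ x ∈ T, d x| ≤ ∑ x ∈ T, |d x| := Finset.abs_sum_le_sum_abs _ _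
    have h2 : |∑ x ∈ T, d x| = |∑ x ∈ Tᶜ, d x| := by
      have : ∑ x ∈ T, d x = -∑ x ∈ Tᶜ, d x := by linarith
      rw [this, abs_neg]
    have h3 : |∑ x ∈ Tᶜ, d x| ≤ ∑ x ∈ Tᶜ, |d x| := Finset.abs_sum_le_sum_abs _ _
    have h4 : ∑ x ∈ T, |d x| + ∑ x ∈ Tᶜ, |d x| = ∑ x, |d x| :=
      Finset.sum_add_sum_compl T _
    linarith
  -- step B : (∑ |d|)² ≤ 4 (1 - B²)
  have habs : ∀ x, |d x| = |Real.sqrt (w₁ x) - Real.sqrt (w₂ x)| *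
      (Real.sqrt (w₁ x) + Real.sqrt (w₂ x)) := by
    intro x
    have e : d x = (Real.sqrt (w₁ x) - Real.sqrt (w₂ x)) *
        (Real.sqrt (w₁ x) + Real.sqrt (w₂ x)) := by
      have e1 := Real.sq_sqrt (h₁ x)
      have e2 := Real.sq_sqrt (h₂ x)
      simp only [hd]; nlinarith
    rw [e, abs_mul, abs_of_nonneg (show (0:ℝ) ≤ Real.sqrt (w₁ x) + Real.sqrt (w₂ x) by positivity)]
  have hCS : (∑ x, |d x|) ^ 2 ≤
      (∑ x, (Real.sqrt (w₁ x) - Real.sqrt (w₂ x)) ^ 2) *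
      (∑ x, (Real.sqrt (w₁ x) + Real.sqrt (w₂ x)) ^ 2) := by
    calc (∑ x, |d x|) ^ 2
        = (∑ x, |Real.sqrt (w₁ x) - Real.sqrt (w₂ x)| *
            (Real.sqrt (w₁ x) + Real.sqrt (w₂ x))) ^ 2 := by
          congr 1; exact Finset.sum_congr rfl fun x _ => habs x
      _ ≤ (∑ x, |Real.sqrt (w₁ x) - Real.sqrt (w₂ x)| ^ 2) *
            (∑ x, (Real.sqrt (w₁ x) + Real.sqrt (w₂ x)) ^ 2) :=
          Finset.sum_mul_sq_le_sq_mul_sq _ _ _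
      _ = _ := by simp [sq_abs]
  have hsum_sub : ∑ x, (Real.sqrt (w₁ x) - Real.sqrt (w₂ x)) ^ 2 = 2 - 2 * B := by
    have : ∀ x, (Real.sqrt (w₁ x) - Real.sqrt (w₂ x)) ^ 2 =
        w₁ x + w₂ x - 2 * Real.sqrt (w₁ x * w₂ x) := by
      intro x
      have e1 := Real.sq_sqrt (h₁ x)
      have e2 := Real.sq_sqrt (h₂ x)
      have e3 : Real.sqrt (w₁ x) * Real.sqrt (w₂ x) = Real.sqrt (w₁ x * w₂ x) :=
        (Real.sqrt_mul (h₁ x) _).symm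
      nlinarith
    rw [Finset.sum_congr rfl fun x _ => this x]
    simp [Finset.sum_add_distrib, Finset.sum_sub_distrib, hs₁, hs₂, hB, Finset.mul_sum]
    rw [← Finset.mul_sum, hB]; ring
  have hsum_add : ∑ x, (Real.sqrt (w₁ x) + Real.sqrt (w₂ x)) ^ 2 = 2 + 2 * B := by
    have : ∀ x, (Real.sqrt (w₁ x) + Real.sqrt (w₂ x)) ^ 2 =
        w₁ x + w₂ x + 2 * Real.sqrt (w₁ x * w₂ x) := by
      intro x
      have e1 := Real.sq_sqrt (h₁ x)
      have e2 := Real.sq_sqrt (h₂ x)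
      have e3 : Real.sqrt (w₁ x) * Real.sqrt (w₂ x) = Real.sqrt (w₁ x * w₂ x) :=
        (Real.sqrt_mul (h₁ x) _).symm
      nlinarith
    rw [Finset.sum_congr rfl fun x _ => this x]
    simp [Finset.sum_add_distrib, hs₁, hs₂, hB, Finset.mul_sum]
    rw [← Finset.mul_sum, hB]; ring
  have hB2 : (∑ x, |d x|) ^ 2 ≤ 4 * (1 - B ^ 2) := by
    rw [hsum_sub, hsum_add] at hCS; nlinarith
  have habs_nonneg : 0 ≤ ∑ x, |d x| := Finset.sum_nonneg fun x _ => abs_nonneg _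
  have hfinal : (∑ x, |d x|) / 2 ≤ Real.sqrt (1 - B ^ 2) := by
    rw [show (1 - B^2 : ℝ) = ((∑ x, |d x|) / 2)^2 + ((1 - B^2) - ((∑ x, |d x|)/2)^2) by ring]
    have : 0 ≤ (1 - B^2) - ((∑ x, |d x|)/2)^2 := by nlinarith
    calc (∑ x, |d x|) / 2 = Real.sqrt (((∑ x, |d x|) / 2)^2) := by
          rw [Real.sqrt_sq (by positivity)]
      _ ≤ _ := Real.sqrt_le_sqrt (by linarith)
  calc |∑ x ∈ T, w₁ x - ∑ x ∈ T, w₂ x| = |∑ x ∈ T, d x| := by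
        rw [Finset.sum_sub_distrib]
    _ ≤ (∑ x, |d x|) / 2 := hA
    _ ≤ Real.sqrt (1 - B ^ 2) := hfinal

/-- TV bound between products of oppositely biased Bernoullis, via the KL chain rule
and Pinsker's inequality. -/
theorem tv_product_bernoulli {ι : Type*} [Fintype ι] (δ : ι → ℝ) (γ : ℝ)
    (hδ0 : ∀ s, 0 ≤ δ s) (hδ1 : ∀ s, δ s ≤ 1/4)
    (hγ0 : 0 ≤ γ) (hsum : ∑ s, δ s ^ 2 ≤ γ ^ 2) (hγ : 12 * γ ^ 2 ≤ 1) :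
    tvDist (Measure.pi fun s : ι => bernMeasure (1/2 - δ s))
        (Measure.pi fun s : ι => bernMeasure (1/2 + δ s))
      ≤ Real.sqrt (6 * ∑ s, δ s ^ 2) ∧
    Real.sqrt (6 * ∑ s, δ s ^ 2) ≤ Real.sqrt 6 * γ := by
  classical
  set t := ∑ s, δ s ^ 2 with ht
  have ht0 : 0 ≤ t := Finset.sum_nonneg fun s _ => sq_nonneg _
  constructor
  · -- first inequality
    set w₁ : (ι → Bool) → ℝ := fun x => ∏ s, (if x s then 1/2 - δ s else 1 - (1/2 - δ s))
      with hw₁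
    set w₂ : (ι → Bool) → ℝ := fun x => ∏ s, (if x s then 1/2 + δ s else 1 - (1/2 + δ s))
      with hw₂
    have hf₁ : ∀ s (b : Bool), 0 ≤ (if b then 1/2 - δ s else 1 - (1/2 - δ s)) := by
      intro s b; cases b <;> simp <;> [linarith [hδ0 s]; linarith [hδ1 s]]
    have hf₂ : ∀ s (b : Bool), 0 ≤ (if b then 1/2 + δ s else 1 - (1/2 + δ s)) := by
      intro s b; cases b <;> simp <;> [linarith [hδ1 s]; linarith [hδ0 s]]
    have hw₁0 : ∀ x, 0 ≤ w₁ x := fun x => Finset.prod_nonneg fun s _ => hf₁ s (x s)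
    have hw₂0 : ∀ x, 0 ≤ w₂ x := fun x => Finset.prod_nonneg fun s _ => hf₂ s (x s)
    have hsum₁ : ∑ x, w₁ x = 1 := by
      rw [hw₁, ← Fintype.prod_sum (fun s (b : Bool) => if b then 1/2 - δ s else 1 - (1/2 - δ s))]
      apply Finset.prod_eq_one
      intro s _
      simp
    have hsum₂ : ∑ x, w₂ x = 1 := by
      rw [hw₂, ← Fintype.prod_sum (fun s (b : Bool) => if b then 1/2 + δ s else 1 - (1/2 + δ s))]
      apply Finset.prod_eq_one
      intro s _
      simp
    set B : ℝ := ∏ s, Real.sqrt (1 - 4 * δ s ^ 2) with hBdef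
    have hδsq : ∀ s, δ s ^ 2 ≤ 1/16 := by
      intro s; nlinarith [hδ0 s, hδ1 s]
    have hB : ∑ x, Real.sqrt (w₁ x * w₂ x) = B := by
      have hmul : ∀ x : ι → Bool, w₁ x * w₂ x = ∏ s, (1/4 - δ s ^ 2) := by
        intro x
        rw [hw₁, hw₂, ← Finset.prod_mul_distrib]
        refine Finset.prod_congr rfl fun s _ => ?_
        cases x s <;> simp <;> ring
      have hsq : ∀ x : ι → Bool, Real.sqrt (w₁ x * w₂ x) = ∏ s, Real.sqrt (1/4 - δ s ^ 2) := by
        intro x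
        rw [hmul x, sqrt_prod' _ _ (fun s _ => by linarith [hδsq s])]
      rw [Finset.sum_congr rfl fun x _ => hsq x, Finset.sum_const, Finset.card_univ,
        Fintype.card_fun, Fintype.card_bool, nsmul_eq_mul, hBdef]
      have : ∀ s, Real.sqrt (1 - 4 * δ s ^ 2) = 2 * Real.sqrt (1/4 - δ s ^ 2) := by
        intro s
        rw [show (1 - 4 * δ s ^ 2 : ℝ) = 4 * (1/4 - δ s ^ 2) by ring,
          Real.sqrt_mul (by norm_num), show Real.sqrt 4 = 2 by
            rw [show (4:ℝ) = 2^2 by norm_num, Real.sqrt_sq (by norm_num)]]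
      rw [Finset.prod_congr rfl fun s _ => this s, Finset.prod_mul_distrib,
        Finset.prod_const, Finset.card_univ]
      push_cast
      ring
    have hB2 : 1 - B ^ 2 ≤ 6 * t := by
      have hBsq : B ^ 2 = ∏ s, (1 - 4 * δ s ^ 2) := by
        rw [hBdef, ← Finset.prod_pow]
        exact Finset.prod_congr rfl fun s _ => Real.sq_sqrt (by linarith [hδsq s])
      have hW := weierstrass (Finset.univ : Finset ι) (fun s => 4 * δ s ^ 2)
        (fun s _ => by positivity) (fun s _ => by show 4 * δ s ^ 2 ≤ 1; linarith [hδsq s])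
      have h4t : ∑ s, 4 * δ s ^ 2 = 4 * t := by rw [ht, Finset.mul_sum]
      rw [hBsq]
      rw [h4t] at hW
      linarith
    -- bound each element of the sSup set
    apply Real.sSup_le _ (Real.sqrt_nonneg _)
    rintro r ⟨A, -, rfl⟩
    have hmeas : ∀ g : ι → ℝ, (∀ s (b : Bool), 0 ≤ (if b then g s else 1 - g s)) →
        ((Measure.pi fun s : ι => bernMeasure (g s)) A).toReal
          = ∑ x ∈ A.toFinite.toFinset, ∏ s, (if x s then g s else 1 - g s) := by
      intro g hg
      set F := A.toFinite.toFinset with hF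
      have hA : A = ⋃ x ∈ F, ({x} : Set (ι → Bool)) := by
        ext y
        simp only [Set.mem_iUnion, Set.mem_singleton_iff, exists_prop, hF,
          Set.Finite.mem_toFinset]
        exact ⟨fun h => ⟨y, h, rfl⟩, fun ⟨x, hx, e⟩ => e ▸ hx⟩
      have hμ : (Measure.pi fun s : ι => bernMeasure (g s)) A = ∑ x ∈ F, ENNReal.ofReal
          (∏ s, (if x s then g s else 1 - g s)) := by
        rw [hA, measure_biUnion_finset]
        · refine Finset.sum_congr rfl fun x _ => ?_
          rw [pi_bern_singleton, ← ENNReal.ofReal_prod_of_nonneg (fun s _ => hg s (x s))]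
        · intro x _ y _ hxy
          simp [Set.disjoint_singleton, hxy]
        · exact fun x _ => measurableSet_singleton x
      rw [hμ, ← ENNReal.ofReal_sum_of_nonneg
        (fun x _ => Finset.prod_nonneg fun s _ => hg s (x s)),
        ENNReal.toReal_ofReal (Finset.sum_nonneg fun x _ =>
          Finset.prod_nonneg fun s _ => hg s (x s))]
    rw [hmeas _ hf₁, hmeas _ hf₂]
    calc |∑ x ∈ A.toFinite.toFinset, w₁ x - ∑ x ∈ A.toFinite.toFinset, w₂ x|
        ≤ Real.sqrt (1 - B ^ 2) :=
          tv_core w₁ w₂ hw₁0 hw₂0 hsum₁ hsum₂ B hB _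
      _ ≤ Real.sqrt (6 * t) := Real.sqrt_le_sqrt (by linarith)
  · -- second inequality
    calc Real.sqrt (6 * t) ≤ Real.sqrt (6 * γ ^ 2) :=
          Real.sqrt_le_sqrt (by nlinarith)
      _ = Real.sqrt 6 * γ := by
          rw [Real.sqrt_mul (by norm_num), Real.sqrt_sq hγ0]
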